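/- arXiv:cond-mat/0212456 — 5 statements merged into one kernel-verified Lean document; each statement's English description precedes it below -/
import Mathlib

section
/- For 0 < q < 1 and τ₀ > 0, define σ_q(k) = (1-q)·∑_{r≥1} (q^{r/2}/(r(1-q^r)))·(e^{ikr} − q^{rτ₀/(1-q)}·e^{-ikr}) for k ∈ ℝ. Then as q → 1 (with q = 1 − 1/T, T → ∞), σ_q(k) converges to 2i·∑_{r≥1} (e^{-rτ₀/2}/r²)·sin((k − iτ₀/2)r), uniformly on compact subsets of ℝ. -/
open Complex Filter Topology

/- ================= definitions ================= -/

private noncomputable def cc (T : ℝ) (r : ℕ) : ℝ :=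
  (1 - (1 - 1 / T)) *
    ((1 - 1 / T) ^ (((r : ℝ) + 1) / 2) /
      (((r : ℝ) + 1) * (1 - (1 - 1 / T) ^ ((r : ℝ) + 1))))

private noncomputable def bb (τ₀ T : ℝ) (r : ℕ) : ℝ :=
  (1 - 1 / T) ^ (((r : ℝ) + 1) * τ₀ / (1 - (1 - 1 / T)))

private noncomputable def EE (τ₀ : ℝ) (r : ℕ) : ℝ := Real.exp (-(((r : ℝ) + 1) * τ₀))

private noncomputable def dd (τ₀ T : ℝ) (r : ℕ) : ℝ :=
  |cc T r - 1 / ((r : ℝ) + 1) ^ 2| + |cc T r * bb τ₀ T r - EE τ₀ r / ((r : ℝ) + 1) ^ 2|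

/- ================= elementary bounds ================= -/

private lemma aux_bern (q m : ℝ) (hq0 : 0 < q) (hq1 : q < 1) (hm : 0 < m) :
    m * q ^ m * (1 - q) ≤ 1 - q ^ m := by
  have hlog : Real.log q < 0 := Real.log_neg hq0 hq1
  set s : ℝ := -Real.log q with hs
  have hs0 : 0 < s := by simp [hs]; linarith
  have hqm : q ^ m = Real.exp (-(m * s)) := by
    rw [Real.rpow_def_of_pos hq0]; congr 1; simp [hs]; ring
  have hq' : q = Real.exp (-s) := by rw [hs, neg_neg, Real.exp_log hq0]
  have h1 : 1 - Real.exp (-s) ≤ s := by nlinarith [Real.add_one_le_exp (-s)]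
  have h2 : 1 + m * s ≤ Real.exp (m * s) := by nlinarith [Real.add_one_le_exp (m * s)]
  have h3 : Real.exp (-(m * s)) * Real.exp (m * s) = 1 := by rw [← Real.exp_add]; simp
  have h4 : (0:ℝ) < Real.exp (-(m * s)) := Real.exp_pos _
  have h5 : (0:ℝ) < Real.exp (-s) := Real.exp_pos _
  rw [hqm]
  rw [hq']
  nlinarith [mul_le_mul_of_nonneg_left h1 (mul_pos hm h4).le,
    mul_le_mul_of_nonneg_left h2 h4.le]

private lemma aux_c_pos_denom (q : ℝ) (hq0 : 0 < q) (hq1 : q < 1) (n : ℝ) (hn : 1 ≤ n) :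
    0 < 1 - q ^ n :=
  sub_pos.mpr (Real.rpow_lt_one hq0.le hq1 (by linarith))

private lemma aux_c_bound (q : ℝ) (hq0 : 0 < q) (hq1 : q < 1) (n : ℝ) (hn : 1 ≤ n) :
    (1 - q) * (q ^ (n / 2) / (n * (1 - q ^ n))) ≤ 2 / n ^ 2 := by
  have hn0 : 0 < n := by linarith
  have hA : 0 < q ^ (n / 2) := Real.rpow_pos_of_pos hq0 _
  have hD : 0 < 1 - q ^ n := aux_c_pos_denom q hq0 hq1 n hn
  have hmono : q ^ n ≤ q ^ (n / 2) :=
    Real.rpow_le_rpow_of_exponent_ge hq0 hq1.le (by linarith)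
  have key : n / 2 * q ^ (n / 2) * (1 - q) ≤ 1 - q ^ n := by
    have := aux_bern q (n / 2) hq0 hq1 (by linarith)
    linarith
  rw [mul_div_assoc', div_le_div_iff₀ (by positivity) (by positivity)]
  nlinarith [mul_le_mul_of_nonneg_left key (by positivity : (0:ℝ) ≤ 2 * n), hA.le, hD.le]

private lemma aux_q_facts (T : ℝ) (hT : 2 ≤ T) : 0 < 1 - 1 / T ∧ 1 - 1 / T < 1 := by
  have hT0 : (0:ℝ) < T := by linarith
  have h1 : 0 < 1 / T := by positivity
  have h2 : 1 / T ≤ 1 / 2 := by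
    rw [div_le_div_iff₀ hT0 (by norm_num)]; linarith
  exact ⟨by linarith, by linarith⟩

/-- all the uniform (in `T ≥ 2`) bounds we need -/
private lemma aux_facts (τ₀ : ℝ) (hτ₀ : 0 < τ₀) (T : ℝ) (hT : 2 ≤ T) (r : ℕ) :
    0 ≤ cc T r ∧ cc T r ≤ 2 / ((r : ℝ) + 1) ^ 2 ∧ 0 ≤ bb τ₀ T r ∧ bb τ₀ T r ≤ 1 := by
  obtain ⟨hq0, hq1⟩ := aux_q_facts T hT
  have hn : (1:ℝ) ≤ (r : ℝ) + 1 := by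
    have := Nat.cast_nonneg (α := ℝ) r; linarith
  have hD : 0 < 1 - (1 - 1 / T) ^ ((r : ℝ) + 1) := aux_c_pos_denom _ hq0 hq1 _ hn
  have hT0 : (0:ℝ) < T := by linarith
  refine ⟨?_, aux_c_bound _ hq0 hq1 _ hn, ?_, ?_⟩
  · apply mul_nonneg (by linarith)
    apply div_nonneg (Real.rpow_nonneg hq0.le _)
    positivity
  · exact Real.rpow_nonneg hq0.le _
  · apply Real.rpow_le_one hq0.le hq1.le
    rw [show (1:ℝ) - (1 - 1 / T) = 1 / T by ring]
    positivity

private lemma aux_d_bound (τ₀ : ℝ) (hτ₀ : 0 < τ₀) (T : ℝ) (hT : 2 ≤ T) (r : ℕ) :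
    dd τ₀ T r ≤ 6 / ((r : ℝ) + 1) ^ 2 := by
  obtain ⟨hc0, hc2, hb0, hb1⟩ := aux_facts τ₀ hτ₀ T hT r
  have hn0 : (0:ℝ) < ((r : ℝ) + 1) ^ 2 := by positivity
  have hE0 : 0 < EE τ₀ r := Real.exp_pos _
  have hE1 : EE τ₀ r ≤ 1 := by
    apply Real.exp_le_one_iff.mpr
    have : (0:ℝ) < ((r : ℝ) + 1) * τ₀ := by positivity
    linarith
  have hcb : 0 ≤ cc T r * bb τ₀ T r := mul_nonneg hc0 hb0
  have hcb2 : cc T r * bb τ₀ T r ≤ 2 / ((r : ℝ) + 1) ^ 2 := by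
    calc cc T r * bb τ₀ T r ≤ cc T r * 1 := by
          exact mul_le_mul_of_nonneg_left hb1 hc0
      _ = cc T r := mul_one _
      _ ≤ _ := hc2
  have hadd : 2 / ((r : ℝ) + 1) ^ 2 + 1 / ((r : ℝ) + 1) ^ 2 = 3 / ((r : ℝ) + 1) ^ 2 := by
    ring
  have hone : (0:ℝ) < 1 / ((r : ℝ) + 1) ^ 2 := by positivity
  have h1 : |cc T r - 1 / ((r : ℝ) + 1) ^ 2| ≤ 3 / ((r : ℝ) + 1) ^ 2 := by
    rw [abs_le]
    constructor <;> linarith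
  have h2 : |cc T r * bb τ₀ T r - EE τ₀ r / ((r : ℝ) + 1) ^ 2| ≤ 3 / ((r : ℝ) + 1) ^ 2 := by
    rw [abs_le]
    have hE2 : 0 < EE τ₀ r / ((r : ℝ) + 1) ^ 2 := by positivity
    have hE3 : EE τ₀ r / ((r : ℝ) + 1) ^ 2 ≤ 1 / ((r : ℝ) + 1) ^ 2 := by
      gcongr
    constructor <;> linarith
  have : dd τ₀ T r = |cc T r - 1 / ((r : ℝ) + 1) ^ 2| +
      |cc T r * bb τ₀ T r - EE τ₀ r / ((r : ℝ) + 1) ^ 2| := rfl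
  rw [this]
  have hadd2 : 3 / ((r : ℝ) + 1) ^ 2 + 3 / ((r : ℝ) + 1) ^ 2 = 6 / ((r : ℝ) + 1) ^ 2 := by
    ring
  linarith

private lemma aux_summable : Summable (fun r : ℕ => 6 / ((r : ℝ) + 1) ^ 2) := by
  have h0 : Summable (fun n : ℕ => 1 / (n : ℝ) ^ 2) :=
    Real.summable_one_div_nat_pow.mpr one_lt_two
  have h1 : Summable (fun r : ℕ => 1 / ((r : ℝ) + 1) ^ 2) := by
    have := (summable_nat_add_iff 1).mpr h0
    apply this.congr
    intro r
    push_cast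
    ring
  have := h1.mul_left 6
  apply this.congr
  intro r
  ring

/- ================= pointwise limits ================= -/

private lemma aux_q_lim : Tendsto (fun T : ℝ => 1 - 1 / T) atTop (𝓝 1) := by
  have h : Tendsto (fun T : ℝ => 1 / T) atTop (𝓝 0) := by
    simpa [one_div] using tendsto_inv_atTop_zero
  simpa using tendsto_const_nhds.sub h

private lemma aux_c_lim (r : ℕ) :
    Tendsto (fun T : ℝ => cc T r) atTop (𝓝 (1 / ((r : ℝ) + 1) ^ 2)) := by
  set n : ℝ := (r : ℝ) + 1 with hn
  have hn0 : (0:ℝ) < n := by positivity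
  set φ : ℝ → ℝ := fun q => q ^ (n / 2) / (n * ∑ i ∈ Finset.range (r + 1), q ^ i) with hφ
  have hφc : ContinuousAt φ 1 := by
    apply ContinuousAt.div
    · exact Real.continuousAt_rpow_const 1 (n / 2) (Or.inl one_ne_zero)
    · fun_prop
    · simp [hn]
      positivity
  have hφ1 : φ 1 = 1 / n ^ 2 := by
    simp [hφ, hn]
    rw [← mul_inv, ← sq]
  have hcomp : Tendsto (fun T : ℝ => φ (1 - 1 / T)) atTop (𝓝 (1 / n ^ 2)) := by
    rw [← hφ1]; exact hφc.tendsto.comp aux_q_lim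
  apply hcomp.congr'
  filter_upwards [eventually_ge_atTop (2:ℝ)] with T hT
  obtain ⟨hq0, hq1⟩ := aux_q_facts T hT
  set q : ℝ := 1 - 1 / T with hq
  have hS : (0:ℝ) < ∑ i ∈ Finset.range (r + 1), q ^ i :=
    Finset.sum_pos (fun i _ => pow_pos hq0 i) ⟨0, Finset.mem_range.mpr (Nat.succ_pos r)⟩
  have hgeo : 1 - q ^ (r + 1) = (∑ i ∈ Finset.range (r + 1), q ^ i) * (1 - q) := by
    have := geom_sum_mul q (r + 1)
    linarith
  have hrpow : q ^ n = q ^ (r + 1 : ℕ) := by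
    rw [hn, show ((r:ℝ) + 1) = ((r + 1 : ℕ) : ℝ) by push_cast; ring, Real.rpow_natCast]
  have h1q : (0:ℝ) < 1 - q := by linarith
  have halg : ∀ A D t : ℝ, t ≠ 0 → D ≠ 0 → t * (A / (D * t)) = A / D := by
    intro A D t ht hD
    field_simp
  rw [hφ]
  simp only
  rw [cc, ← hq, hrpow, hgeo, show ((r:ℝ) + 1) = n by rw [hn],
    show n * ((∑ i ∈ Finset.range (r + 1), q ^ i) * (1 - q))
      = (n * ∑ i ∈ Finset.range (r + 1), q ^ i) * (1 - q) by ring,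
    halg _ _ _ h1q.ne' (by positivity)]

private lemma aux_b_lim' (a : ℝ) :
    Tendsto (fun T : ℝ => (1 - 1 / T) ^ (a * T)) atTop (𝓝 (Real.exp (-a))) := by
  have h1 : Tendsto (fun T : ℝ => (1 - 1 / T) ^ T) atTop (𝓝 (Real.exp (-1))) := by
    have h := Real.tendsto_one_add_div_rpow_exp (-1)
    refine h.congr fun x => ?_
    rw [show (1:ℝ) + -1 / x = 1 - 1 / x by ring]
  have hc : ContinuousAt (fun z : ℝ => z ^ a) (Real.exp (-1)) :=
    Real.continuousAt_rpow_const _ _ (Or.inl (Real.exp_pos _).ne')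
  have h2 := hc.tendsto.comp h1
  have h3 : Real.exp (-1) ^ a = Real.exp (-a) := by
    rw [← Real.exp_mul]; norm_num
  rw [h3] at h2
  apply h2.congr'
  filter_upwards [eventually_ge_atTop (2:ℝ)] with T hT
  obtain ⟨hq0, _⟩ := aux_q_facts T hT
  simp only [Function.comp]
  rw [← Real.rpow_mul hq0.le, mul_comm]

private lemma aux_b_lim (τ₀ : ℝ) (r : ℕ) :
    Tendsto (fun T : ℝ => bb τ₀ T r) atTop (𝓝 (EE τ₀ r)) := by
  have h := aux_b_lim' (((r : ℝ) + 1) * τ₀)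
  rw [EE]
  apply h.congr
  intro T
  rw [bb, show (1:ℝ) - (1 - 1 / T) = 1 / T by ring, one_div]
  rw [div_eq_mul_inv, inv_inv]

private lemma aux_d_lim (τ₀ : ℝ) (r : ℕ) :
    Tendsto (fun T : ℝ => dd τ₀ T r) atTop (𝓝 0) := by
  have hc := aux_c_lim r
  have hb := aux_b_lim τ₀ r
  have h1 : Tendsto (fun T : ℝ => |cc T r - 1 / ((r : ℝ) + 1) ^ 2|) atTop (𝓝 0) := by
    have := (hc.sub_const (1 / ((r : ℝ) + 1) ^ 2)).abs
    simpa using this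
  have h2 : Tendsto (fun T : ℝ => |cc T r * bb τ₀ T r - EE τ₀ r / ((r : ℝ) + 1) ^ 2|)
      atTop (𝓝 0) := by
    have := ((hc.mul hb).sub_const (EE τ₀ r / ((r : ℝ) + 1) ^ 2)).abs
    have heq : |1 / ((r : ℝ) + 1) ^ 2 * EE τ₀ r - EE τ₀ r / ((r : ℝ) + 1) ^ 2| = 0 := by
      rw [abs_eq_zero]
      ring
    rw [heq] at this
    exact this
  simpa [dd] using h1.add h2

private lemma aux_tsum_d_lim (τ₀ : ℝ) (hτ₀ : 0 < τ₀) :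
    Tendsto (fun T : ℝ => ∑' r : ℕ, dd τ₀ T r) atTop (𝓝 0) := by
  have h := tendsto_tsum_of_dominated_convergence (𝓕 := atTop)
    (f := fun T r => dd τ₀ T r) (g := fun _ => 0)
    (bound := fun r : ℕ => 6 / ((r : ℝ) + 1) ^ 2) aux_summable
    (fun r => aux_d_lim τ₀ r) ?_
  · simpa using h
  · filter_upwards [eventually_ge_atTop (2:ℝ)] with T hT
    intro r
    have h0 : (0:ℝ) ≤ dd τ₀ T r := add_nonneg (abs_nonneg _) (abs_nonneg _)
    rw [Real.norm_eq_abs, _root_.abs_of_nonneg h0]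
    exact aux_d_bound τ₀ hτ₀ T hT r

/- ================= complex term identities ================= -/

private lemma aux_euler (w : ℂ) :
    Complex.exp (w * Complex.I) - Complex.exp (-(w * Complex.I)) =
      2 * Complex.I * Complex.sin w := by
  rw [show -(w * Complex.I) = -w * Complex.I by ring, Complex.exp_mul_I,
    Complex.exp_mul_I, Complex.sin_neg, Complex.cos_neg]
  ring

private lemma aux_term_id (τ₀ k x : ℝ) :
    2 * Complex.I * (((Real.exp (-x * τ₀ / 2) / x ^ 2 : ℝ) : ℂ) *
        Complex.sin (((k : ℂ) - Complex.I * τ₀ / 2) * x)) =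
      ((1 / x ^ 2 : ℝ) : ℂ) * Complex.exp (Complex.I * k * x) -
        ((Real.exp (-(x * τ₀)) / x ^ 2 : ℝ) : ℂ) * Complex.exp (-(Complex.I * k * x)) := by
  set w : ℂ := ((k : ℂ) - Complex.I * τ₀ / 2) * x with hw
  have hw1 : w * Complex.I = Complex.I * k * x + ((x * τ₀ / 2 : ℝ) : ℂ) := by
    rw [hw]; push_cast
    linear_combination (-(x:ℂ) * τ₀ / 2) * Complex.I_sq
  have e1 : Complex.exp (w * Complex.I) =
      Complex.exp (Complex.I * k * x) * Complex.exp (((x * τ₀ / 2 : ℝ) : ℂ)) := by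
    rw [hw1, Complex.exp_add]
  have e2 : Complex.exp (-(w * Complex.I)) =
      Complex.exp (-(Complex.I * k * x)) * Complex.exp ((-(x * τ₀ / 2) : ℝ) : ℂ) := by
    rw [hw1, neg_add, Complex.exp_add]
    push_cast
    ring_nf
  have r1 : (Real.exp (-x * τ₀ / 2) / x ^ 2) * Real.exp (x * τ₀ / 2) = 1 / x ^ 2 := by
    rw [div_mul_eq_mul_div, ← Real.exp_add,
      show -x * τ₀ / 2 + x * τ₀ / 2 = 0 by ring, Real.exp_zero]
  have r2 : (Real.exp (-x * τ₀ / 2) / x ^ 2) * Real.exp (-(x * τ₀ / 2)) =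
      Real.exp (-(x * τ₀)) / x ^ 2 := by
    rw [div_mul_eq_mul_div, ← Real.exp_add]
    ring_nf
  calc 2 * Complex.I * (((Real.exp (-x * τ₀ / 2) / x ^ 2 : ℝ) : ℂ) * Complex.sin w)
      = ((Real.exp (-x * τ₀ / 2) / x ^ 2 : ℝ) : ℂ) *
          (Complex.exp (w * Complex.I) - Complex.exp (-(w * Complex.I))) := by
        rw [aux_euler]; ring
    _ = _ := by
        rw [e1, e2, ← Complex.ofReal_exp, ← Complex.ofReal_exp]
        push_cast [← r1, ← r2]
        ring

private lemma aux_exp_norm (k : ℝ) (z : ℂ) (hz : z.re = 0) : ‖Complex.exp z‖ = 1 := by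
  rw [Complex.norm_exp, hz, Real.exp_zero]

/- ================= main theorem ================= -/

/-- For `0 < q < 1` and `τ₀ > 0`, with `q = 1 - 1/T`, the function
`σ_q(k) = (1-q) ∑_{r≥1} (q^{r/2}/(r(1-q^r))) (e^{ikr} - q^{rτ₀/(1-q)} e^{-ikr})`
converges, as `T → ∞`, to `2i ∑_{r≥1} (e^{-rτ₀/2}/r²) sin((k - iτ₀/2) r)`,
uniformly on compact subsets of `ℝ`. -/
theorem sigma_convergence (τ₀ : ℝ) (hτ₀ : 0 < τ₀) (K : Set ℝ) (hK : IsCompact K) :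
    TendstoUniformlyOn
      (fun (T : ℝ) (k : ℝ) =>
        ((1 - (1 - 1 / T) : ℝ) : ℂ) *
          ∑' r : ℕ,
            (((1 - 1 / T) ^ (((r : ℝ) + 1) / 2) /
                (((r : ℝ) + 1) * (1 - (1 - 1 / T) ^ ((r : ℝ) + 1))) : ℝ) : ℂ) *
              (Complex.exp (Complex.I * k * ((r : ℕ) + 1)) -
                (((1 - 1 / T) ^ (((r : ℝ) + 1) * τ₀ / (1 - (1 - 1 / T))) : ℝ) : ℂ) *
                  Complex.exp (-(Complex.I * k * ((r : ℕ) + 1)))))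
      (fun k : ℝ =>
        2 * Complex.I *
          ∑' r : ℕ,
            ((Real.exp (-((r : ℝ) + 1) * τ₀ / 2) / ((r : ℝ) + 1) ^ 2 : ℝ) : ℂ) *
              Complex.sin (((k : ℂ) - Complex.I * τ₀ / 2) * ((r : ℕ) + 1)))
      atTop K := by
  rw [Metric.tendstoUniformlyOn_iff]
  intro ε hε
  filter_upwards [(aux_tsum_d_lim τ₀ hτ₀).eventually_lt_const hε,
    eventually_ge_atTop (2:ℝ)] with T hsum hT
  intro k hk
  -- notation
  set X : ℕ → ℂ := fun r => Complex.exp (Complex.I * k * ((r : ℕ) + 1)) with hX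
  set Y : ℕ → ℂ := fun r => Complex.exp (-(Complex.I * k * ((r : ℕ) + 1))) with hY
  set F : ℕ → ℂ := fun r => ((cc T r : ℝ) : ℂ) * X r -
    ((cc T r * bb τ₀ T r : ℝ) : ℂ) * Y r with hF
  set G : ℕ → ℂ := fun r => ((1 / ((r : ℝ) + 1) ^ 2 : ℝ) : ℂ) * X r -
    ((EE τ₀ r / ((r : ℝ) + 1) ^ 2 : ℝ) : ℂ) * Y r with hG
  -- norms of the exponentials
  have hXn : ∀ r : ℕ, ‖X r‖ = 1 := by
    intro r
    apply aux_exp_norm k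
    simp [Complex.mul_re, Complex.mul_im]
  have hYn : ∀ r : ℕ, ‖Y r‖ = 1 := by
    intro r
    apply aux_exp_norm k
    simp [Complex.mul_re, Complex.mul_im]
  -- the uniform bounds
  have hfacts := fun r => aux_facts τ₀ hτ₀ T hT r
  have hdb := fun r => aux_d_bound τ₀ hτ₀ T hT r
  have hd0 : ∀ r, 0 ≤ dd τ₀ T r := fun r => add_nonneg (abs_nonneg _) (abs_nonneg _)
  have hdsum : Summable (dd τ₀ T) := aux_summable.of_nonneg_of_le hd0 hdb
  -- ‖F r - G r‖ ≤ dd τ₀ T r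
  have hFG : ∀ r : ℕ, ‖F r - G r‖ ≤ dd τ₀ T r := by
    intro r
    have hsplit : F r - G r =
        ((cc T r - 1 / ((r : ℝ) + 1) ^ 2 : ℝ) : ℂ) * X r -
          ((cc T r * bb τ₀ T r - EE τ₀ r / ((r : ℝ) + 1) ^ 2 : ℝ) : ℂ) * Y r := by
      rw [hF, hG]
      push_cast
      ring
    rw [hsplit]
    calc ‖_ - _‖ ≤ ‖((cc T r - 1 / ((r : ℝ) + 1) ^ 2 : ℝ) : ℂ) * X r‖ +
          ‖((cc T r * bb τ₀ T r - EE τ₀ r / ((r : ℝ) + 1) ^ 2 : ℝ) : ℂ) * Y r‖ :=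
        norm_sub_le _ _
      _ = dd τ₀ T r := by
        rw [norm_mul, norm_mul, hXn, hYn, Complex.norm_real, Complex.norm_real,
          Real.norm_eq_abs, Real.norm_eq_abs, mul_one, mul_one, dd]
  -- summabilities
  have hFGsum : Summable (fun r => F r - G r) :=
    Summable.of_norm (hdsum.of_nonneg_of_le (fun r => norm_nonneg _) hFG)
  have hGsum : Summable G := by
    apply Summable.of_norm
    apply aux_summable.of_nonneg_of_le (fun r => norm_nonneg _)
    intro r
    have hE0 : 0 < EE τ₀ r := Real.exp_pos _
    have hE1 : EE τ₀ r ≤ 1 := by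
      apply Real.exp_le_one_iff.mpr
      have : (0:ℝ) < ((r : ℝ) + 1) * τ₀ := by positivity
      linarith
    have hn2 : (0:ℝ) < ((r : ℝ) + 1) ^ 2 := by positivity
    calc ‖G r‖ ≤ ‖((1 / ((r : ℝ) + 1) ^ 2 : ℝ) : ℂ) * X r‖ +
          ‖((EE τ₀ r / ((r : ℝ) + 1) ^ 2 : ℝ) : ℂ) * Y r‖ := norm_sub_le _ _
      _ = |1 / ((r : ℝ) + 1) ^ 2| + |EE τ₀ r / ((r : ℝ) + 1) ^ 2| := by
        rw [norm_mul, norm_mul, hXn, hYn, Complex.norm_real, Complex.norm_real,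
          Real.norm_eq_abs, Real.norm_eq_abs, mul_one, mul_one]
      _ ≤ 6 / ((r : ℝ) + 1) ^ 2 := by
        rw [_root_.abs_of_nonneg (by positivity), _root_.abs_of_nonneg (by positivity)]
        have h1 : EE τ₀ r / ((r : ℝ) + 1) ^ 2 ≤ 1 / ((r : ℝ) + 1) ^ 2 := by gcongr
        have h2 : 1 / ((r : ℝ) + 1) ^ 2 + 1 / ((r : ℝ) + 1) ^ 2 ≤ 6 / ((r : ℝ) + 1) ^ 2 := by
          rw [← add_div]
          gcongr
          norm_num
        linarith [h1, h2]
  have hFsum : Summable F := by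
    have := hFGsum.add hGsum
    apply this.congr
    intro r
    ring
  -- identification of the two sides
  have hfEq : ((1 - (1 - 1 / T) : ℝ) : ℂ) *
      ∑' r : ℕ,
        (((1 - 1 / T) ^ (((r : ℝ) + 1) / 2) /
            (((r : ℝ) + 1) * (1 - (1 - 1 / T) ^ ((r : ℝ) + 1))) : ℝ) : ℂ) *
          (Complex.exp (Complex.I * k * ((r : ℕ) + 1)) -
            (((1 - 1 / T) ^ (((r : ℝ) + 1) * τ₀ / (1 - (1 - 1 / T))) : ℝ) : ℂ) *
              Complex.exp (-(Complex.I * k * ((r : ℕ) + 1)))) = ∑' r : ℕ, F r := by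
    rw [← tsum_mul_left]
    apply tsum_congr
    intro r
    rw [hF, hX, hY]
    simp only [cc, bb]
    push_cast
    ring
  have hgEq : (2 * Complex.I *
      ∑' r : ℕ,
        ((Real.exp (-((r : ℝ) + 1) * τ₀ / 2) / ((r : ℝ) + 1) ^ 2 : ℝ) : ℂ) *
          Complex.sin (((k : ℂ) - Complex.I * τ₀ / 2) * ((r : ℕ) + 1))) = ∑' r : ℕ, G r := by
    rw [← tsum_mul_left]
    apply tsum_congr
    intro r
    have h := aux_term_id τ₀ k ((r : ℝ) + 1)
    rw [hG, hX, hY]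
    simp only [EE]
    push_cast at h ⊢
    linear_combination h
  -- final estimate
  rw [dist_eq_norm, hfEq, hgEq, ← Summable.tsum_sub hGsum hFsum]
  calc ‖∑' r, (G r - F r)‖ ≤ ∑' r, ‖G r - F r‖ := by
        apply norm_tsum_le_tsum_norm
        have := hdsum.of_nonneg_of_le (fun r => norm_nonneg _) hFG
        apply this.congr
        intro r
        rw [norm_sub_rev]
    _ ≤ ∑' r, dd τ₀ T r := by
        apply Summable.tsum_le_tsum ?_ ?_ hdsum
        · intro r
          rw [norm_sub_rev]
          exact hFG r
        · have := hdsum.of_nonneg_of_le (fun r => norm_nonneg _) hFG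
          apply this.congr
          intro r
          rw [norm_sub_rev]
    _ < ε := hsum
end

section
/- For τ₀ > 0 let E(k) = 2i·∑_{r≥1} (e^{-rτ₀/2}/r²)·sin((k − iτ₀/2)r) − iζ₀k for k ∈ ℂ with |Im(k − iτ₀/2)| < τ₀/2, where ζ₀ ∈ ℝ satisfies b_∞⁻(τ₀) < ζ₀ < b_∞(τ₀) with b_∞⁻(τ) = −2ln(1+e^{-τ/2}) and b_∞(τ) = −2ln(1−e^{-τ/2}). Then the critical points of E on the line Im k = τ₀/2 are exactly ±k_c + iτ₀/2, where k_c = arccos(cosh(τ₀/2) − e^{-ζ₀+τ₀/2}/2) ∈ (0, π). -/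
open Complex

lemma aux_norm_cos_le (z : ℂ) : ‖Complex.cos z‖ ≤ Real.exp |z.im| := by
  rw [Complex.cos]
  have h1 : ‖Complex.exp (z * I)‖ ≤ Real.exp |z.im| := by
    rw [Complex.norm_exp]
    apply Real.exp_le_exp.2
    simp [Complex.mul_re]
    exact neg_le_abs _
  have h2 : ‖Complex.exp (-z * I)‖ ≤ Real.exp |z.im| := by
    rw [Complex.norm_exp]
    apply Real.exp_le_exp.2
    simp [Complex.mul_re]
    exact le_abs_self _
  calc ‖(Complex.exp (z * I) + Complex.exp (-z * I)) / 2‖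
      = ‖Complex.exp (z * I) + Complex.exp (-z * I)‖ / 2 := by
        rw [norm_div]; norm_num
    _ ≤ (Real.exp |z.im| + Real.exp |z.im|) / 2 := by
        gcongr; exact (norm_add_le _ _).trans (by gcongr)
    _ = Real.exp |z.im| := by ring

lemma aux_hasDerivAt (τ₀ : ℝ) (hτ₀ : 0 < τ₀) (y : ℂ) (hy : y.im = τ₀ / 2) :
    HasDerivAt (fun k : ℂ => ∑' r : ℕ,
      ((Real.exp (-((r : ℝ) + 1) * τ₀ / 2) / ((r : ℝ) + 1) ^ 2 : ℝ) : ℂ) *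
        Complex.sin ((k - Complex.I * τ₀ / 2) * ((r : ℕ) + 1)))
      (∑' r : ℕ, ((Real.exp (-((r : ℝ) + 1) * τ₀ / 2) / ((r : ℝ) + 1) ^ 2 : ℝ) : ℂ) *
        (((r : ℕ) + 1 : ℂ)) * Complex.cos ((y - Complex.I * τ₀ / 2) * ((r : ℕ) + 1))) y := by
  set t : Set ℂ := Complex.im ⁻¹' Set.Ioo (τ₀ / 4) (3 * τ₀ / 4) with ht
  have hyt : y ∈ t := by
    simp only [ht, Set.mem_preimage, Set.mem_Ioo, hy]; constructor <;> linarith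
  have hy₀t : (Complex.I * τ₀ / 2) ∈ t := by
    simp only [ht, Set.mem_preimage, Set.mem_Ioo]
    simp [Complex.div_im]
    constructor <;> linarith
  apply hasDerivAt_tsum_of_isPreconnected
    (u := fun r : ℕ => Real.exp (-τ₀ / 4) ^ (r + 1))
    (g := fun (r : ℕ) (k : ℂ) =>
      ((Real.exp (-((r : ℝ) + 1) * τ₀ / 2) / ((r : ℝ) + 1) ^ 2 : ℝ) : ℂ) *
        Complex.sin ((k - Complex.I * τ₀ / 2) * ((r : ℕ) + 1)))
    (t := Complex.im ⁻¹' Set.Ioo (τ₀ / 4) (3 * τ₀ / 4))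
    (y₀ := Complex.I * τ₀ / 2)
    (g' := fun (r : ℕ) (z : ℂ) =>
      ((Real.exp (-((r : ℝ) + 1) * τ₀ / 2) / ((r : ℝ) + 1) ^ 2 : ℝ) : ℂ) *
        (((r : ℕ) + 1 : ℂ)) * Complex.cos ((z - Complex.I * τ₀ / 2) * ((r : ℕ) + 1)))
  · -- Summable u
    have : Summable (fun r : ℕ => Real.exp (-τ₀ / 4) ^ r) :=
      summable_geometric_of_lt_one (Real.exp_nonneg _)
        (by rw [Real.exp_lt_one_iff]; linarith)
    simpa [pow_succ'] using this.mul_left (Real.exp (-τ₀ / 4))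
  · exact isOpen_Ioo.preimage Complex.continuous_im
  · exact ((convex_Ioo _ _).linear_preimage Complex.imLm).isPreconnected
  · -- HasDerivAt
    intro r z hz
    have h1 : HasDerivAt (fun k : ℂ => (k - Complex.I * τ₀ / 2) * ((r : ℕ) + 1))
        (((r : ℕ) + 1 : ℂ)) z := by
      simpa using ((hasDerivAt_id z).sub_const (Complex.I * τ₀ / 2)).mul_const
        (((r : ℕ) + 1 : ℂ))
    have h2 := (Complex.hasDerivAt_sin ((z - Complex.I * τ₀ / 2) * ((r : ℕ) + 1))).comp z h1
    have h3 := h2.const_mul ((Real.exp (-((r : ℝ) + 1) * τ₀ / 2) / ((r : ℝ) + 1) ^ 2 : ℝ) : ℂ)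
    convert h3 using 1
    · rfl
    · rfl
    · ring
  · -- bound
    intro r z hz
    simp only [ht, Set.mem_preimage, Set.mem_Ioo] at hz
    have him : |((z - Complex.I * τ₀ / 2) * ((r : ℕ) + 1)).im| ≤ (τ₀ / 4) * ((r : ℝ) + 1) := by
      have : ((z - Complex.I * τ₀ / 2) * ((r : ℕ) + 1)).im = (z.im - τ₀ / 2) * ((r : ℝ) + 1) := by
        first
        | (simp [Complex.mul_im, Complex.sub_im, Complex.div_im]; push_cast; ring)
        | (simp [Complex.mul_im, Complex.sub_im, Complex.div_im])
      rw [this, abs_mul, _root_.abs_of_nonneg (by positivity : (0:ℝ) ≤ (r : ℝ) + 1)]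
      have h4 : |z.im - τ₀ / 2| ≤ τ₀ / 4 := by
        rw [abs_le]; constructor <;> [linarith [hz.1]; linarith [hz.2]]
      exact mul_le_mul_of_nonneg_right h4 (by positivity)
    have hr1 : (0:ℝ) < (r : ℝ) + 1 := by positivity
    calc ‖((Real.exp (-((r : ℝ) + 1) * τ₀ / 2) / ((r : ℝ) + 1) ^ 2 : ℝ) : ℂ) *
          (((r : ℕ) + 1 : ℂ)) * Complex.cos ((z - Complex.I * τ₀ / 2) * ((r : ℕ) + 1))‖
        = (Real.exp (-((r : ℝ) + 1) * τ₀ / 2) / ((r : ℝ) + 1)) *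
            ‖Complex.cos ((z - Complex.I * τ₀ / 2) * ((r : ℕ) + 1))‖ := by
          rw [norm_mul, norm_mul]
          have : ‖(((r : ℕ) + 1 : ℂ))‖ = (r : ℝ) + 1 := by
            push_cast
            simpa using Complex.norm_of_nonneg hr1.le
          rw [this, Complex.norm_real, Real.norm_of_nonneg (by positivity)]
          field_simp
      _ ≤ (Real.exp (-((r : ℝ) + 1) * τ₀ / 2) / ((r : ℝ) + 1)) *
            Real.exp ((τ₀ / 4) * ((r : ℝ) + 1)) := by
          gcongr
          exact (aux_norm_cos_le _).trans (Real.exp_le_exp.2 him)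
      _ ≤ Real.exp (-((r : ℝ) + 1) * τ₀ / 2) * Real.exp ((τ₀ / 4) * ((r : ℝ) + 1)) := by
          gcongr
          apply div_le_self (Real.exp_nonneg _)
          linarith [Nat.cast_nonneg (α := ℝ) r]
      _ = Real.exp (-τ₀ / 4) ^ (r + 1) := by
          rw [← Real.exp_add, ← Real.exp_nat_mul]
          congr 1
          push_cast
          ring
  · exact hy₀t
  · -- summable at y₀
    apply summable_of_ne_finset_zero (s := ∅)
    intro r _
    have : (Complex.I * τ₀ / 2 - Complex.I * τ₀ / 2) * ((r : ℕ) + 1) = 0 := by ring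
    simp [this]
  · exact hyt

lemma aux_sum (q x : ℝ) (hq0 : 0 < q) (hq1 : q < 1) :
    HasSum (fun r : ℕ => q ^ (r + 1) / ((r : ℝ) + 1) * Real.cos (x * ((r : ℝ) + 1)))
      (-Real.log (1 - 2 * q * Real.cos x + q ^ 2) / 2) := by
  set z : ℂ := (q : ℂ) * Complex.exp ((x : ℂ) * I) with hz
  have hznorm : ‖z‖ = q := by
    rw [hz, norm_mul, Complex.norm_exp]
    simp [_root_.abs_of_nonneg hq0.le]
  have hzlt : ‖z‖ < 1 := by rw [hznorm]; exact hq1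
  have h := Complex.reCLM.hasSum (Complex.hasSum_taylorSeries_neg_log hzlt)
  have hterm : ∀ n : ℕ, Complex.reCLM (z ^ n / n) = q ^ n / n * Real.cos (x * n) := by
    intro n
    have hzn : z ^ n / n = ((q ^ n / n : ℝ) : ℂ) * Complex.exp (((x * n : ℝ) : ℂ) * I) := by
      rw [hz, mul_pow, ← Complex.exp_nat_mul]
      push_cast
      ring
    show (z ^ n / (n : ℂ)).re = _
    rw [hzn, Complex.re_ofReal_mul, Complex.exp_ofReal_mul_I_re]
  rw [funext hterm] at h
  -- shift the index
  have h2 := (hasSum_nat_add_iff' (f := fun n : ℕ => q ^ n / n * Real.cos (x * n)) 1).2 h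
  simp only [Finset.range_one, Finset.sum_singleton, Nat.cast_zero, div_zero, zero_mul,
    sub_zero, pow_zero] at h2
  norm_num at h2
  -- identify the sum value
  have habs : 1 - 2 * q * Real.cos x + q ^ 2 = ‖1 - z‖ ^ 2 := by
    rw [Complex.sq_norm, Complex.normSq_apply]
    have h1 : (1 - z).re = 1 - q * Real.cos x := by
      simp [hz, Complex.exp_ofReal_mul_I_re]
    have h2 : (1 - z).im = -(q * Real.sin x) := by
      simp [hz, Complex.exp_ofReal_mul_I_im]
    rw [h1, h2]
    have := Real.sin_sq_add_cos_sq x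
    nlinarith [this]
  have hne : (1 : ℂ) - z ≠ 0 := by
    intro hcon
    have : ‖(1 : ℂ)‖ = ‖z‖ := by rw [sub_eq_zero] at hcon; rw [hcon]
    simp [hznorm] at this
    linarith
  have hval : (-Complex.log (1 - z)).re = -Real.log (1 - 2 * q * Real.cos x + q ^ 2) / 2 := by
    rw [Complex.neg_re, Complex.log_re, habs, Real.log_pow]
    push_cast
    ring
  rw [show -(Complex.log (1 - z)).re = -Real.log (1 - 2 * q * Real.cos x + q ^ 2) / 2 from by
    rw [← Complex.neg_re]; exact hval] at h2
  exact h2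

/-- For `τ₀ > 0` and `b_∞⁻(τ₀) < ζ₀ < b_∞(τ₀)`, the critical points on the line
`Im k = τ₀/2` (with `Re k ∈ [-π, π]`) of
`E(k) = 2i ∑_{r≥1} (e^{-rτ₀/2}/r²) sin((k - iτ₀/2) r) - iζ₀ k`
are exactly `± k_c + iτ₀/2`, where
`k_c = arccos(cosh(τ₀/2) - e^{-ζ₀+τ₀/2}/2) ∈ (0, π)`. -/
theorem critical_points_of_E (τ₀ ζ₀ : ℝ) (hτ₀ : 0 < τ₀)
    (hζ₀l : -2 * Real.log (1 + Real.exp (-τ₀ / 2)) < ζ₀)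
    (hζ₀u : ζ₀ < -2 * Real.log (1 - Real.exp (-τ₀ / 2)))
    (E : ℂ → ℂ)
    (hE : E = fun k =>
      2 * Complex.I * (∑' r : ℕ,
          ((Real.exp (-((r : ℝ) + 1) * τ₀ / 2) / ((r : ℝ) + 1) ^ 2 : ℝ) : ℂ) *
            Complex.sin ((k - Complex.I * τ₀ / 2) * ((r : ℕ) + 1)))
        - Complex.I * ζ₀ * k)
    (kc : ℝ) (hkc : kc = Real.arccos (Real.cosh (τ₀ / 2) - Real.exp (-ζ₀ + τ₀ / 2) / 2)) :
    kc ∈ Set.Ioo 0 Real.pi ∧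
    ∀ x : ℝ, x ∈ Set.Icc (-Real.pi) Real.pi →
      (deriv E ((x : ℂ) + Complex.I * τ₀ / 2) = 0 ↔ (x = kc ∨ x = -kc)) := by
  set q : ℝ := Real.exp (-τ₀ / 2) with hq
  have hq0 : 0 < q := Real.exp_pos _
  have hq1 : q < 1 := by rw [hq, Real.exp_lt_one_iff]; linarith
  set c : ℝ := Real.cosh (τ₀ / 2) - Real.exp (-ζ₀ + τ₀ / 2) / 2 with hcdef
  have hqE : q * Real.exp (τ₀ / 2) = 1 := by
    rw [hq, ← Real.exp_add, show -τ₀ / 2 + τ₀ / 2 = 0 by ring, Real.exp_zero]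
  have hc2q : 2 * q * c = 1 + q ^ 2 - Real.exp (-ζ₀) := by
    rw [hcdef, Real.cosh_eq, show (-ζ₀ + τ₀ / 2) = -ζ₀ + τ₀ / 2 from rfl, Real.exp_add]
    have h1 : Real.exp (-(τ₀ / 2)) = q := by rw [hq]; congr 1; ring
    linear_combination (1 - Real.exp (-ζ₀)) * hqE + q * h1
  -- bounds on c
  have hexpl : Real.exp (-ζ₀) < (1 + q) ^ 2 := by
    have h1 : -ζ₀ < 2 * Real.log (1 + q) := by linarith
    have h2 : Real.log ((1 + q) ^ 2) = 2 * Real.log (1 + q) := by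
      rw [Real.log_pow]; push_cast; ring
    calc Real.exp (-ζ₀) < Real.exp (Real.log ((1 + q) ^ 2)) := by
          apply Real.exp_lt_exp.2; rw [h2]; exact h1
      _ = (1 + q) ^ 2 := Real.exp_log (by positivity)
  have hexpu : (1 - q) ^ 2 < Real.exp (-ζ₀) := by
    have h1 : 2 * Real.log (1 - q) < -ζ₀ := by linarith
    have h2 : Real.log ((1 - q) ^ 2) = 2 * Real.log (1 - q) := by
      rw [Real.log_pow]; push_cast; ring
    calc (1 - q) ^ 2 = Real.exp (Real.log ((1 - q) ^ 2)) :=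
          (Real.exp_log (by nlinarith)).symm
      _ < Real.exp (-ζ₀) := by apply Real.exp_lt_exp.2; rw [h2]; exact h1
  have hcl : -1 < c := by nlinarith
  have hcu : c < 1 := by nlinarith
  have hcoskc : Real.cos kc = c := by rw [hkc]; exact Real.cos_arccos hcl.le hcu.le
  have hkc0 : 0 < kc := by rw [hkc]; exact Real.arccos_pos.2 hcu
  have hkcpi : kc < Real.pi := by
    rcases lt_or_eq_of_le (Real.arccos_le_pi c) with h | h
    · rw [hkc]; exact h
    · exfalso
      have : Real.cos kc = -1 := by rw [hkc, h, Real.cos_pi]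
      rw [hcoskc] at this; linarith
  refine ⟨⟨hkc0, hkcpi⟩, ?_⟩
  intro x hx
  set y : ℂ := (x : ℂ) + Complex.I * τ₀ / 2 with hy
  have hyim : y.im = τ₀ / 2 := by
    simp [hy, Complex.add_im, Complex.div_im, Complex.mul_im]
  have hsub : y - Complex.I * τ₀ / 2 = (x : ℂ) := by rw [hy]; ring
  -- derivative of E
  have hS := aux_hasDerivAt τ₀ hτ₀ y hyim
  have hlin : HasDerivAt (fun k : ℂ => Complex.I * ζ₀ * k) (Complex.I * ζ₀) y := by
    simpa using (hasDerivAt_id y).const_mul (Complex.I * (ζ₀ : ℂ))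
  have haS := aux_sum q x hq0 hq1
  set S : ℝ := -Real.log (1 - 2 * q * Real.cos x + q ^ 2) / 2 with hSdef
  have hsum_eq : (∑' r : ℕ,
      ((Real.exp (-((r : ℝ) + 1) * τ₀ / 2) / ((r : ℝ) + 1) ^ 2 : ℝ) : ℂ) *
      (((r : ℕ) + 1 : ℂ)) * Complex.cos ((y - Complex.I * τ₀ / 2) * ((r : ℕ) + 1))) = (S : ℂ) := by
    have hterm : ∀ r : ℕ,
        ((Real.exp (-((r : ℝ) + 1) * τ₀ / 2) / ((r : ℝ) + 1) ^ 2 : ℝ) : ℂ) *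
        (((r : ℕ) + 1 : ℂ)) * Complex.cos ((y - Complex.I * τ₀ / 2) * ((r : ℕ) + 1))
        = ((q ^ (r + 1) / ((r : ℝ) + 1) * Real.cos (x * ((r : ℝ) + 1)) : ℝ) : ℂ) := by
      intro r
      have hexp : Real.exp (-((r : ℝ) + 1) * τ₀ / 2) = q ^ (r + 1) := by
        rw [hq, ← Real.exp_nat_mul]
        congr 1
        push_cast
        ring
      have hr1 : ((r : ℝ) + 1) ≠ 0 := by positivity
      rw [hsub]
      have hcos : Complex.cos ((x : ℂ) * ((r : ℕ) + 1))
          = ((Real.cos (x * ((r : ℝ) + 1)) : ℝ) : ℂ) := by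
        rw [Complex.ofReal_cos]
        push_cast
        ring_nf
      have hr1c : ((r : ℂ) + 1) ≠ 0 := by
        exact_mod_cast Nat.cast_add_one_ne_zero (R := ℂ) r
      rw [hcos, hexp]
      push_cast
      field_simp
    rw [tsum_congr hterm]
    rw [← Complex.ofReal_tsum]
    rw [haS.tsum_eq]
  have hED : HasDerivAt E (2 * Complex.I * (S : ℂ) - Complex.I * ζ₀) y := by
    rw [hE]
    exact ((hsum_eq ▸ hS).const_mul (2 * Complex.I)).sub hlin
  rw [hED.deriv]
  -- now a purely algebraic/real computation
  have hDpos : 0 < 1 - 2 * q * Real.cos x + q ^ 2 := by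
    nlinarith [Real.cos_le_one x, Real.neg_one_le_cos x]
  have key : 2 * Complex.I * (S : ℂ) - Complex.I * ζ₀ = 0 ↔ Real.cos x = c := by
    constructor
    · intro h
      have h2 : ((2 * S - ζ₀ : ℝ) : ℂ) = 0 := by
        have : Complex.I * ((2 * S - ζ₀ : ℝ) : ℂ) = 0 := by push_cast; linear_combination h
        rcases mul_eq_zero.1 this with h3 | h3
        · exact absurd h3 Complex.I_ne_zero
        · exact h3
      have h3 : 2 * S - ζ₀ = 0 := by exact_mod_cast h2
      have h4 : Real.log (1 - 2 * q * Real.cos x + q ^ 2) = -ζ₀ := by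
        rw [hSdef] at h3; linarith
      have h5 : 1 - 2 * q * Real.cos x + q ^ 2 = Real.exp (-ζ₀) := by
        rw [← h4, Real.exp_log hDpos]
      have h6 : 2 * q * Real.cos x = 2 * q * c := by linarith
      exact mul_left_cancel₀ (by positivity) h6
    · intro h
      have h5 : 1 - 2 * q * Real.cos x + q ^ 2 = Real.exp (-ζ₀) := by
        rw [h]; linarith
      have h4 : Real.log (1 - 2 * q * Real.cos x + q ^ 2) = -ζ₀ := by
        rw [h5, Real.log_exp]
      have h3 : 2 * S - ζ₀ = 0 := by rw [hSdef, h4]; ring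
      have : ((2 * S - ζ₀ : ℝ) : ℂ) = 0 := by exact_mod_cast h3
      push_cast at this
      linear_combination Complex.I * this
  rw [key]
  -- cos x = c ↔ x = kc ∨ x = -kc
  rw [← hcoskc]
  constructor
  · intro h
    rcases le_or_gt 0 x with hx0 | hx0
    · left
      exact Real.injOn_cos ⟨hx0, hx.2⟩ ⟨hkc0.le, hkcpi.le⟩ h
    · right
      have hnx : -x ∈ Set.Icc 0 Real.pi := ⟨by linarith, by linarith [hx.1]⟩
      have : Real.cos (-x) = Real.cos kc := by rw [Real.cos_neg]; exact h
      have := Real.injOn_cos hnx ⟨hkc0.le, hkcpi.le⟩ this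
      linarith
  · rintro (rfl | rfl)
    · rfl
    · rw [Real.cos_neg]
end

section
/- For τ₀ > 0 define Q(x) = (1 − e^{ix + x/√3 − τ₀/2})(1 − e^{−ix − x/√3 − τ₀/2})/(1 − e^{−τ₀/2})² for x ∈ [0, π]. Then Re Q(x) = (cosh(τ₀/2) − cosh(x/√3)·cos x)/(2 sinh²(τ₀/4)) and Im Q(x) = −sin(x)·sinh(x/√3)/(2 sinh²(τ₀/4)); moreover Re Q(x) ≥ 1 with equality only at x = 0, and Im Q(x) ≤ 0. -/
open Complex

lemma cosh_quartic_bound' {u : ℝ} (h0 : 0 ≤ u) (h1 : u ≤ 1) :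
    Real.cosh u ≤ 1 + u ^ 2 / 2 + u ^ 4 / 12 := by
  have hb1 := Real.exp_bound (x := u) (by rw [_root_.abs_of_nonneg h0]; exact h1) (n := 5) (by norm_num)
  have hb2 := Real.exp_bound (x := -u) (by rw [abs_neg, _root_.abs_of_nonneg h0]; exact h1) (n := 5)
    (by norm_num)
  rw [abs_sub_le_iff] at hb1 hb2
  have h1' := hb1.1
  have h2' := hb2.1
  simp only [Finset.sum_range_succ, Finset.sum_range_zero, abs_neg, _root_.abs_of_nonneg h0] at h1' h2'
  norm_num [Nat.factorial] at h1' h2'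
  have hu5 : u ^ 5 ≤ u ^ 4 := pow_le_pow_of_le_one h0 h1 (by norm_num)
  rw [Real.cosh_eq]
  nlinarith [pow_nonneg h0 4]

lemma cos_quartic_bound' {x : ℝ} (h0 : 0 < x) (h1 : x ≤ Real.pi / 2) :
    Real.cos x ≤ 1 - x ^ 2 / 2 + x ^ 4 / 16 := by
  have hpi : Real.pi ≤ 3.15 := by linarith [Real.pi_lt_d2]
  have hx1 : x / 2 ≤ 1 := by linarith
  have hs : x / 2 - (x / 2) ^ 3 / 4 < Real.sin (x / 2) := by
    have := Real.sin_gt_sub_cube (by positivity : (0:ℝ) < x / 2)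
    nlinarith [pow_pos (by positivity : (0:ℝ) < x / 2) 3]
  have hsq : Real.sin (x / 2) ^ 2 = 1 / 2 - Real.cos x / 2 := by
    have := Real.sin_sq_eq_half_sub (x / 2)
    rwa [show 2 * (x / 2) = x by ring] at this
  have h3 : (x / 2) ^ 3 ≤ x / 2 := by
    nlinarith [mul_nonneg (mul_nonneg h0.le h0.le) h0.le, sq_nonneg (x/2)]
  have hpos : 0 < x / 2 - (x / 2) ^ 3 / 4 := by nlinarith
  nlinarith [sq_nonneg (x/2 - (x/2)^3/4), sq_nonneg x, sq_nonneg (x^2)]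

lemma cosh_mul_cos_lt_one' {x : ℝ} (h0 : 0 < x) (h1 : x ≤ Real.pi) :
    Real.cosh (x / Real.sqrt 3) * Real.cos x < 1 := by
  have hpi : Real.pi ≤ 3.15 := by linarith [Real.pi_lt_d2]
  have hcoshpos := Real.cosh_pos (x := x / Real.sqrt 3)
  rcases le_or_gt (Real.cos x) 0 with hc | hc
  · nlinarith
  · have hxlt : x ≤ Real.pi / 2 := by
      by_contra h
      push_neg at h
      have := Real.cos_nonpos_of_pi_div_two_le_of_le h.le (by linarith)
      linarith
    have hs3 : (1.7 : ℝ) ≤ Real.sqrt 3 := by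
      rw [show (1.7:ℝ) = Real.sqrt (1.7^2) by rw [Real.sqrt_sq]; norm_num]
      exact Real.sqrt_le_sqrt (by norm_num)
    have hs3pos : (0:ℝ) < Real.sqrt 3 := by linarith
    set u := x / Real.sqrt 3 with hu
    have hu0 : 0 ≤ u := by positivity
    have hu1 : u ≤ 1 := by
      rw [hu, div_le_one hs3pos]; linarith
    have husq : u ^ 2 = x ^ 2 / 3 := by
      rw [hu, div_pow, Real.sq_sqrt (by norm_num : (3:ℝ) ≥ 0)]
    have hu4 : u ^ 4 = x ^ 4 / 9 := by
      have : u ^ 4 = (u ^ 2) ^ 2 := by ring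
      rw [this, husq]; ring
    have hcosh := cosh_quartic_bound' hu0 hu1
    have hcos := cos_quartic_bound' h0 hxlt
    rw [husq, hu4] at hcosh
    have hx2 : x ^ 2 ≤ 2.49 := by nlinarith
    have hB : (0:ℝ) < 1 + x ^ 2 / 3 / 2 + x ^ 4 / 9 / 12 := by positivity
    have step : Real.cosh u * Real.cos x ≤
        (1 + x ^ 2 / 3 / 2 + x ^ 4 / 9 / 12) * (1 - x ^ 2 / 2 + x ^ 4 / 16) := by
      have := mul_le_mul hcosh hcos (by linarith) hB.le
      nlinarith [mul_le_mul_of_nonneg_right hcosh hc.le]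
    calc Real.cosh u * Real.cos x ≤ _ := step
      _ < 1 := by
        nlinarith [sq_nonneg x, sq_nonneg (x^2), pow_pos h0 2, pow_pos h0 4, pow_pos h0 6,
          pow_pos h0 8]

/-- For `τ₀ > 0` and
`Q(x) = (1 - e^{ix + x/√3 - τ₀/2})(1 - e^{-ix - x/√3 - τ₀/2})/(1 - e^{-τ₀/2})²`,
one has `Re Q(x) = (cosh(τ₀/2) - cosh(x/√3) cos x)/(2 sinh²(τ₀/4))` and
`Im Q(x) = -sin x sinh(x/√3)/(2 sinh²(τ₀/4))`; moreover `Re Q(x) ≥ 1` with equality only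
at `x = 0`, and `Im Q(x) ≤ 0`, for all `x ∈ [0, π]`. -/
theorem Q_re_im_and_bounds (τ₀ : ℝ) (hτ₀ : 0 < τ₀)
    (Q : ℝ → ℂ)
    (hQ : Q = fun x : ℝ =>
      (1 - Complex.exp (Complex.I * (x : ℂ) + (x : ℂ) / Real.sqrt 3 - (τ₀ : ℂ) / 2)) *
        (1 - Complex.exp (-(Complex.I * (x : ℂ)) - (x : ℂ) / Real.sqrt 3 - (τ₀ : ℂ) / 2)) /
        (1 - Complex.exp (-(τ₀ : ℂ) / 2)) ^ 2) :
    ∀ x ∈ Set.Icc (0 : ℝ) Real.pi,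
      (Q x).re = (Real.cosh (τ₀ / 2) - Real.cosh (x / Real.sqrt 3) * Real.cos x) /
          (2 * Real.sinh (τ₀ / 4) ^ 2) ∧
      (Q x).im = -(Real.sin x * Real.sinh (x / Real.sqrt 3)) /
          (2 * Real.sinh (τ₀ / 4) ^ 2) ∧
      1 ≤ (Q x).re ∧ ((Q x).re = 1 → x = 0) ∧ (Q x).im ≤ 0 := by
  intro x hx
  obtain ⟨hx0, hxpi⟩ := hx
  set a := x / Real.sqrt 3 with ha
  set r1 := Real.exp (a - τ₀ / 2) with hr1
  set r2 := Real.exp (-a - τ₀ / 2) with hr2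
  set c := (1 - Real.exp (-(τ₀ / 2))) ^ 2 with hc
  set A := 1 - (r1 + r2) * Real.cos x + r1 * r2 with hA
  set B := -((r1 - r2) * Real.sin x) with hB
  -- complex computation
  have hsc : ((Real.sin x : ℂ)) ^ 2 + ((Real.cos x : ℂ)) ^ 2 = 1 := by
    exact_mod_cast Real.sin_sq_add_cos_sq x
  have he1 : Complex.exp (Complex.I * (x : ℂ) + (x : ℂ) / Real.sqrt 3 - (τ₀ : ℂ) / 2)
      = (r1 : ℂ) * ((Real.cos x : ℂ) + (Real.sin x : ℂ) * Complex.I) := by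
    rw [show Complex.I * (x : ℂ) + (x : ℂ) / Real.sqrt 3 - (τ₀ : ℂ) / 2
        = ((x / Real.sqrt 3 - τ₀ / 2 : ℝ) : ℂ) + (x : ℂ) * Complex.I by push_cast; ring,
      Complex.exp_add, Complex.exp_mul_I, ← Complex.ofReal_exp, ← Complex.ofReal_cos,
      ← Complex.ofReal_sin]
  have he2 : Complex.exp (-(Complex.I * (x : ℂ)) - (x : ℂ) / Real.sqrt 3 - (τ₀ : ℂ) / 2)
      = (r2 : ℂ) * ((Real.cos x : ℂ) - (Real.sin x : ℂ) * Complex.I) := by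
    rw [show -(Complex.I * (x : ℂ)) - (x : ℂ) / Real.sqrt 3 - (τ₀ : ℂ) / 2
        = ((-(x / Real.sqrt 3) - τ₀ / 2 : ℝ) : ℂ) + ((-x : ℝ) : ℂ) * Complex.I by
          push_cast; ring,
      Complex.exp_add, Complex.exp_mul_I, ← Complex.ofReal_exp, ← Complex.ofReal_cos,
      ← Complex.ofReal_sin, Real.cos_neg, Real.sin_neg]
    rw [hr2, ha]
    simp only [Complex.ofReal_neg, neg_sub]
    ring
  have he3 : Complex.exp (-(τ₀ : ℂ) / 2) = ((Real.exp (-(τ₀ / 2)) : ℝ) : ℂ) := by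
    rw [show -(τ₀ : ℂ) / 2 = ((-(τ₀ / 2) : ℝ) : ℂ) by push_cast; ring, Complex.ofReal_exp]
  have hQx : Q x = ((A : ℂ) + (B : ℂ) * Complex.I) / (c : ℂ) := by
    rw [hQ]
    simp only []
    rw [he1, he2, he3]
    rw [show ((1:ℂ) - (Real.exp (-(τ₀/2)) : ℂ)) ^ 2 = ((c : ℝ) : ℂ) by
      rw [hc]; push_cast; ring]
    congr 1
    rw [hA, hB]
    simp only [Complex.ofReal_sub, Complex.ofReal_add, Complex.ofReal_mul, Complex.ofReal_neg,
      Complex.ofReal_one]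
    linear_combination (r1 : ℂ) * (r2 : ℂ) * hsc -
      (r1 : ℂ) * (r2 : ℂ) * ((Real.sin x : ℂ)) ^ 2 * Complex.I_sq
  have hre : (Q x).re = A / c := by
    rw [hQx, Complex.div_ofReal_re]
    simp
  have him : (Q x).im = B / c := by
    rw [hQx, Complex.div_ofReal_im]
    simp
  -- real algebra
  set E := Real.exp (τ₀ / 4) with hE
  set F := Real.exp a with hF
  have hE1 : 1 < E := by rw [hE]; exact Real.one_lt_exp_iff.mpr (by linarith)
  have hE0 : 0 < E := by linarith
  have hF0 : 0 < F := Real.exp_pos a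
  have hEne : E ≠ 0 := ne_of_gt hE0
  have hFne : F ≠ 0 := ne_of_gt hF0
  have h2 : Real.exp (τ₀ / 2) = E ^ 2 := by
    rw [show τ₀ / 2 = τ₀ / 4 + τ₀ / 4 by ring, Real.exp_add, hE, sq]
  have hr1' : r1 = F / E ^ 2 := by
    rw [hr1, Real.exp_sub, h2, hF]
  have hr2' : r2 = F⁻¹ / E ^ 2 := by
    rw [hr2, Real.exp_sub, h2, Real.exp_neg, hF]
  have hm : Real.exp (-(τ₀ / 2)) = (E ^ 2)⁻¹ := by
    rw [Real.exp_neg, h2]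
  have hE2 : 1 < E ^ 2 := by nlinarith
  have hE2inv : (E ^ 2)⁻¹ < 1 := by rw [inv_lt_one_iff₀]; right; exact hE2
  have hcne : (1 : ℝ) - (E ^ 2)⁻¹ ≠ 0 := by linarith
  have hsinh : Real.sinh (τ₀ / 4) = (E - E⁻¹) / 2 := by
    rw [Real.sinh_eq, hE, Real.exp_neg]
  have hsinhne : E - E⁻¹ ≠ 0 := by
    have : E⁻¹ < 1 := by rw [inv_lt_one_iff₀]; right; exact hE1
    intro h; nlinarith
  have hD : Real.cosh (τ₀ / 2) = 1 + 2 * Real.sinh (τ₀ / 4) ^ 2 := by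
    simp only [Real.cosh_eq, Real.exp_neg, h2, hm, hsinh]
    field_simp
    ring
  have hid1 : A / c
      = (Real.cosh (τ₀ / 2) - Real.cosh a * Real.cos x) / (2 * Real.sinh (τ₀ / 4) ^ 2) := by
    rw [hA]
    simp only [hr1', hr2', hc, Real.cosh_eq, Real.exp_neg, h2, hm, hsinh, ← hF]
    rw [div_eq_div_iff (pow_ne_zero 2 hcne) (by positivity)]
    field_simp
    ring
  have hid2 : B / c
      = -(Real.sin x * Real.sinh a) / (2 * Real.sinh (τ₀ / 4) ^ 2) := by
    rw [hB]
    simp only [hr1', hr2', hc, Real.sinh_eq, Real.exp_neg, h2, hm, hsinh, ← hF]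
    rw [div_eq_div_iff (pow_ne_zero 2 hcne) (by positivity)]
    field_simp
    ring
  have hre' : (Q x).re = (Real.cosh (τ₀ / 2) - Real.cosh a * Real.cos x) /
      (2 * Real.sinh (τ₀ / 4) ^ 2) := by rw [hre, hid1]
  have him' : (Q x).im = -(Real.sin x * Real.sinh a) /
      (2 * Real.sinh (τ₀ / 4) ^ 2) := by rw [him, hid2]
  -- inequalities
  have hDpos : 0 < 2 * Real.sinh (τ₀ / 4) ^ 2 := by
    have : 0 < Real.sinh (τ₀ / 4) := Real.sinh_pos_iff.mpr (by linarith)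
    positivity
  have hP : Real.cosh a * Real.cos x ≤ 1 := by
    rcases eq_or_lt_of_le hx0 with h | h
    · rw [ha, ← h]
      simp
    · exact (cosh_mul_cos_lt_one' h hxpi).le
  refine ⟨hre', him', ?_, ?_, ?_⟩
  · rw [hre', le_div_iff₀ hDpos]
    linarith [hP, hD]
  · intro h1
    by_contra hne
    have hxpos : 0 < x := lt_of_le_of_ne hx0 (Ne.symm hne)
    have hlt := cosh_mul_cos_lt_one' hxpos hxpi
    rw [hre', div_eq_one_iff_eq (ne_of_gt hDpos)] at h1
    rw [← ha] at hlt
    linarith [hD]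
  · rw [him']
    have hsin : 0 ≤ Real.sin x := Real.sin_nonneg_of_nonneg_of_le_pi hx0 hxpi
    have hsinh0 : 0 ≤ Real.sinh a := Real.sinh_nonneg_iff.mpr (by rw [ha]; positivity)
    apply div_nonpos_of_nonpos_of_nonneg
    · exact neg_nonpos_of_nonneg (mul_nonneg hsin hsinh0)
    · linarith
end

section
/- For all x ∈ [0, π], cosh(x/√3)·cos(x) ≤ 1, with equality if and only if x = 0. -/
open Real

lemma sinh_lt_mul_cosh {t : ℝ} (ht : 0 < t) : Real.sinh t < t * Real.cosh t := by
  have key : StrictMonoOn (fun t : ℝ => t * Real.cosh t - Real.sinh t) (Set.Ici 0) := by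
    apply strictMonoOn_of_deriv_pos (convex_Ici 0)
    · fun_prop
    · intro y hy
      rw [interior_Ici] at hy
      have hd : HasDerivAt (fun t : ℝ => t * Real.cosh t - Real.sinh t)
          (1 * Real.cosh y + y * Real.sinh y - Real.cosh y) y :=
        ((hasDerivAt_id y).mul (Real.hasDerivAt_cosh y)).sub (Real.hasDerivAt_sinh y)
      rw [hd.deriv]
      have hp := Real.sinh_pos_iff.2 hy
      nlinarith [mul_pos (Set.mem_Ioi.1 hy) hp]
  have := key (Set.self_mem_Ici) (Set.mem_Ici.2 ht.le) ht
  simpa using this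

lemma cosh_cos_lt_one {x : ℝ} (hx0 : 0 < x) (hx : x ≤ Real.pi / 2) :
    Real.cosh (x / Real.sqrt 3) * Real.cos x < 1 := by
  have h3 : (0:ℝ) < Real.sqrt 3 := Real.sqrt_pos.2 (by norm_num)
  have key : StrictAntiOn (fun x : ℝ => Real.cosh (x / Real.sqrt 3) * Real.cos x)
      (Set.Icc 0 (Real.pi / 2)) := by
    apply strictAntiOn_of_deriv_neg (convex_Icc _ _)
    · fun_prop
    · intro y hy
      rw [interior_Icc] at hy
      obtain ⟨hy0, hy2⟩ := hy
      have hd : HasDerivAt (fun x : ℝ => Real.cosh (x / Real.sqrt 3) * Real.cos x)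
          (Real.sinh (y / Real.sqrt 3) * (1 / Real.sqrt 3) * Real.cos y +
            Real.cosh (y / Real.sqrt 3) * (-Real.sin y)) y := by
        exact (((Real.hasDerivAt_cosh _).comp y
          ((hasDerivAt_id y).div_const (Real.sqrt 3))).mul (Real.hasDerivAt_cos y))
      rw [hd.deriv]
      have hcos : 0 < Real.cos y := Real.cos_pos_of_mem_Ioo ⟨by linarith [Real.pi_pos], hy2⟩
      have hty : 0 < y / Real.sqrt 3 := div_pos hy0 h3
      have h1 : Real.sinh (y / Real.sqrt 3) < (y / Real.sqrt 3) * Real.cosh (y / Real.sqrt 3) :=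
        sinh_lt_mul_cosh hty
      have h2 : y < Real.tan y := Real.lt_tan hy0 hy2
      rw [Real.tan_eq_sin_div_cos, lt_div_iff₀ hcos] at h2
      have hch : 0 < Real.cosh (y / Real.sqrt 3) := Real.cosh_pos _
      have h3sq : Real.sqrt 3 * Real.sqrt 3 = 3 := Real.mul_self_sqrt (by norm_num)
      -- sinh(t)/√3 * cos y < cosh(t) * sin y
      have hsq3 : (1:ℝ) ≤ Real.sqrt 3 := by nlinarith
      have hb : Real.sinh (y / Real.sqrt 3) * (1 / Real.sqrt 3) * Real.cos y
          < Real.cosh (y / Real.sqrt 3) * Real.sin y := by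
        have step : Real.sinh (y / Real.sqrt 3) * (1 / Real.sqrt 3)
            < Real.cosh (y / Real.sqrt 3) * (y / 3) := by
          have : (y / Real.sqrt 3) * (1 / Real.sqrt 3) = y / 3 := by
            field_simp
            nlinarith [h3sq]
          calc Real.sinh (y / Real.sqrt 3) * (1 / Real.sqrt 3)
              < (y / Real.sqrt 3) * Real.cosh (y / Real.sqrt 3) * (1 / Real.sqrt 3) := by
                apply mul_lt_mul_of_pos_right h1; positivity
            _ = Real.cosh (y / Real.sqrt 3) * (y / 3) := by rw [mul_right_comm, this]; ring
        calc Real.sinh (y / Real.sqrt 3) * (1 / Real.sqrt 3) * Real.cos y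
            < Real.cosh (y / Real.sqrt 3) * (y / 3) * Real.cos y :=
              mul_lt_mul_of_pos_right step hcos
          _ ≤ Real.cosh (y / Real.sqrt 3) * (y * Real.cos y) := by nlinarith [mul_nonneg (mul_nonneg hch.le hy0.le) hcos.le]
          _ < Real.cosh (y / Real.sqrt 3) * Real.sin y := by
              exact mul_lt_mul_of_pos_left h2 hch
      linarith
  have h := key (Set.mem_Icc.2 ⟨le_refl 0, by linarith [Real.pi_pos]⟩)
    (Set.mem_Icc.2 ⟨hx0.le, hx⟩) hx0
  simpa using h

lemma cosh_cos_lt_one' {x : ℝ} (hx0 : 0 < x) (hx : x ≤ Real.pi) :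
    Real.cosh (x / Real.sqrt 3) * Real.cos x < 1 := by
  rcases le_or_gt x (Real.pi / 2) with h | h
  · exact cosh_cos_lt_one hx0 h
  · have hcos : Real.cos x ≤ 0 := Real.cos_nonpos_of_pi_div_two_le_of_le h.le (by linarith)
    have := Real.cosh_pos (x / Real.sqrt 3)
    nlinarith

/-- For all `x ∈ [0, π]`, `cosh(x/√3) cos x ≤ 1`, with equality iff `x = 0`. -/
theorem cosh_mul_cos_le_one (x : ℝ) (hx : x ∈ Set.Icc (0 : ℝ) Real.pi) :
    Real.cosh (x / Real.sqrt 3) * Real.cos x ≤ 1 ∧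
    (Real.cosh (x / Real.sqrt 3) * Real.cos x = 1 ↔ x = 0) := by
  obtain ⟨hx0, hxp⟩ := hx
  rcases eq_or_lt_of_le hx0 with h0 | h0
  · subst h0; simp
  · have h := cosh_cos_lt_one' h0 hxp
    exact ⟨h.le, by constructor <;> intro h' <;> [linarith; (subst h'; simp)]⟩
end

section
/- Let A be a trace-class self-adjoint-free (arbitrary) operator on a finite-dimensional Hilbert space with matrix (A_{k,l}), let Â = ∑_{k,l} A_{k,l} a*_k a_l be its second quantization on fermionic Fock space, and assume det(1 + e^{−A}) ≠ 0. Then the quasi-free state ⟨X⟩ = Tr(e^{−Â} X)/Tr(e^{−Â}) has two-point function ⟨a*_m a_j⟩ = [(1 + e^{A})^{−1}]_{j,m}. -/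
open scoped Matrix Kronecker

noncomputable def kronLeftAlgHom (n m : Type*) [Fintype n] [DecidableEq n] [Fintype m]
    [DecidableEq m] : Matrix m m ℂ →ₐ[ℂ] Matrix (n × m) (n × m) ℂ where
  toFun X := (1 : Matrix n n ℂ) ⊗ₖ X
  map_one' := Matrix.one_kronecker_one
  map_mul' X Y := by rw [← Matrix.mul_kronecker_mul, one_mul]
  map_zero' := Matrix.kronecker_zero 1
  map_add' X Y := Matrix.kronecker_add 1 X Y
  commutes' r := by
    simp only [Algebra.algebraMap_eq_smul_one, Matrix.kronecker_smul, Matrix.one_kronecker_one]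

noncomputable def kronRightAlgHom (n m : Type*) [Fintype n] [DecidableEq n] [Fintype m]
    [DecidableEq m] : Matrix n n ℂ →ₐ[ℂ] Matrix (n × m) (n × m) ℂ where
  toFun Y := Y ⊗ₖ (1 : Matrix m m ℂ)
  map_one' := Matrix.one_kronecker_one
  map_mul' X Y := by rw [← Matrix.mul_kronecker_mul, one_mul]
  map_zero' := Matrix.zero_kronecker 1
  map_add' X Y := Matrix.add_kronecker X Y 1
  commutes' r := by
    simp only [Algebra.algebraMap_eq_smul_one, Matrix.smul_kronecker, Matrix.one_kronecker_one]

@[simp] theorem kronLeftAlgHom_apply {n m : Type*} [Fintype n] [DecidableEq n] [Fintype m]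
    [DecidableEq m] (X : Matrix m m ℂ) :
    kronLeftAlgHom n m X = (1 : Matrix n n ℂ) ⊗ₖ X := rfl

@[simp] theorem kronRightAlgHom_apply {n m : Type*} [Fintype n] [DecidableEq n] [Fintype m]
    [DecidableEq m] (Y : Matrix n n ℂ) :
    kronRightAlgHom n m Y = Y ⊗ₖ (1 : Matrix m m ℂ) := rfl

theorem exp_semiconj' {𝔸 : Type*} [NormedRing 𝔸] [NormedAlgebra ℂ 𝔸] [CompleteSpace 𝔸]
    {X V Y : 𝔸} (h : X * V = V * Y) :
    NormedSpace.exp X * V = V * NormedSpace.exp Y := by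
  have hp : ∀ p : ℕ, X ^ p * V = V * Y ^ p := by
    intro p
    induction p with
    | zero => simp
    | succ p ih =>
        rw [pow_succ, pow_succ, mul_assoc, h, ← mul_assoc, ih, mul_assoc]
  rw [NormedSpace.exp_eq_tsum ℂ, ← (NormedSpace.expSeries_summable' (𝕂 := ℂ) X).tsum_mul_right,
    ← (NormedSpace.expSeries_summable' (𝕂 := ℂ) Y).tsum_mul_left]
  congr 1
  ext p
  rw [smul_mul_assoc, hp p, mul_smul_comm]

theorem Matrix.exp_semiconj {N : Type*} [Fintype N] [DecidableEq N]
    {X V Y : Matrix N N ℂ} (h : X * V = V * Y) :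
    NormedSpace.exp X * V = V * NormedSpace.exp Y := by
  letI : SeminormedRing (Matrix N N ℂ) := Matrix.linftyOpSemiNormedRing
  letI : NormedRing (Matrix N N ℂ) := Matrix.linftyOpNormedRing
  letI : NormedAlgebra ℂ (Matrix N N ℂ) := Matrix.linftyOpNormedAlgebra
  exact exp_semiconj' h

theorem Matrix.map_exp_algHom {N N' : Type*} [Fintype N] [DecidableEq N] [Fintype N']
    [DecidableEq N'] (f : Matrix N N ℂ →ₐ[ℂ] Matrix N' N' ℂ) (X : Matrix N N ℂ) :
    f (NormedSpace.exp X) = NormedSpace.exp (f X) := by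
  letI : SeminormedRing (Matrix N N ℂ) := Matrix.linftyOpSemiNormedRing
  letI : NormedRing (Matrix N N ℂ) := Matrix.linftyOpNormedRing
  letI : NormedAlgebra ℂ (Matrix N N ℂ) := Matrix.linftyOpNormedAlgebra
  letI : SeminormedRing (Matrix N' N' ℂ) := Matrix.linftyOpSemiNormedRing
  letI : NormedRing (Matrix N' N' ℂ) := Matrix.linftyOpNormedRing
  letI : NormedAlgebra ℂ (Matrix N' N' ℂ) := Matrix.linftyOpNormedAlgebra
  letI : NormedAlgebra ℚ (Matrix N N ℂ) := Matrix.linftyOpNormedAlgebra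
  letI : NormedAlgebra ℚ (Matrix N' N' ℂ) := Matrix.linftyOpNormedAlgebra
  exact NormedSpace.map_exp f f.toLinearMap.continuous_of_finiteDimensional X

theorem mulE {n : ℕ} (C : Matrix (Fin n) (Fin n) ℂ) (k c : Fin n) :
    C * Matrix.single k c 1 = ∑ j, C j k • Matrix.single j c 1 := by
  ext p q
  simp [Matrix.mul_apply, Matrix.single, Matrix.sum_apply, ite_and, mul_comm]

theorem kron_sum_smul_left {n m : ℕ} (s : Fin n → ℂ) (E : Fin n → Matrix (Fin n) (Fin n) ℂ)
    (X : Matrix (Fin m) (Fin m) ℂ) :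
    (∑ j, s j • E j) ⊗ₖ X = ∑ j, s j • (E j ⊗ₖ X) := by
  ext ⟨p, i⟩ ⟨q, i'⟩
  simp [Matrix.sum_apply, Finset.sum_mul, mul_assoc]

theorem kron_sum_smul_right {n m : ℕ} (E : Matrix (Fin n) (Fin n) ℂ) (s : Fin n → ℂ)
    (X : Fin n → Matrix (Fin m) (Fin m) ℂ) :
    E ⊗ₖ (∑ j, s j • X j) = ∑ j, s j • (E ⊗ₖ X j) := by
  ext ⟨p, i⟩ ⟨q, i'⟩
  rw [Matrix.kroneckerMap_apply]
  simp only [Matrix.sum_apply, Matrix.smul_apply, Matrix.kroneckerMap_apply, smul_eq_mul,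
    Finset.mul_sum]
  exact Finset.sum_congr rfl fun x _ => by ring

theorem key_creation {m n : ℕ} (astar : Fin n → Matrix (Fin m) (Fin m) ℂ)
    (B : Matrix (Fin n) (Fin n) ℂ) (Bhat : Matrix (Fin m) (Fin m) ℂ)
    (hcomm : ∀ c : Fin n, Bhat * astar c = astar c * Bhat + ∑ k, B k c • astar k)
    (c : Fin n) :
    astar c * NormedSpace.exp (-Bhat)
      = ∑ k, (NormedSpace.exp B) k c • (NormedSpace.exp (-Bhat) * astar k) := by
  classical
  set D : Matrix (Fin n × Fin m) (Fin n × Fin m) ℂ := (1 : Matrix (Fin n) (Fin n) ℂ) ⊗ₖ Bhat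
    with hD
  set P : Matrix (Fin n × Fin m) (Fin n × Fin m) ℂ := Bᵀ ⊗ₖ (1 : Matrix (Fin m) (Fin m) ℂ)
    with hP
  set V : Matrix (Fin n × Fin m) (Fin n × Fin m) ℂ :=
    ∑ k, Matrix.single k c (1 : ℂ) ⊗ₖ astar k with hV
  have hPV : P * V = ∑ k, ∑ l, B l k • (Matrix.single k c (1 : ℂ) ⊗ₖ astar l) := by
    rw [hV, hP, Finset.mul_sum]
    rw [Finset.sum_comm]
    refine Finset.sum_congr rfl fun k _ => ?_
    rw [← Matrix.mul_kronecker_mul, one_mul, mulE, kron_sum_smul_left]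
    refine Finset.sum_congr rfl fun l _ => ?_
    rw [Matrix.transpose_apply]
  have hDV : D * V = V * D + P * V := by
    rw [hPV, hV, hD, Finset.mul_sum, Finset.sum_mul, ← Finset.sum_add_distrib]
    refine Finset.sum_congr rfl fun k _ => ?_
    rw [← Matrix.mul_kronecker_mul, ← Matrix.mul_kronecker_mul, one_mul, mul_one,
      hcomm k, Matrix.kronecker_add, kron_sum_smul_right]
  have hsemi : NormedSpace.exp (P + -D) * V = V * NormedSpace.exp (-D) := by
    apply Matrix.exp_semiconj
    rw [add_mul, neg_mul, hDV, mul_neg]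
    abel
  have hcomPD : Commute P (-D) := by
    apply Commute.neg_right
    show P * D = D * P
    rw [hP, hD, ← Matrix.mul_kronecker_mul, ← Matrix.mul_kronecker_mul, one_mul, mul_one,
      one_mul, mul_one]
  have hexpP : NormedSpace.exp P = (NormedSpace.exp B)ᵀ ⊗ₖ (1 : Matrix (Fin m) (Fin m) ℂ) := by
    have h1 := Matrix.map_exp_algHom (kronRightAlgHom (Fin n) (Fin m)) Bᵀ
    simp only [kronRightAlgHom_apply] at h1
    rw [hP, ← h1, Matrix.exp_transpose]
  have hexpD : NormedSpace.exp (-D) =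
      (1 : Matrix (Fin n) (Fin n) ℂ) ⊗ₖ NormedSpace.exp (-Bhat) := by
    have h1 := Matrix.map_exp_algHom (kronLeftAlgHom (Fin n) (Fin m)) (-Bhat)
    simp only [kronLeftAlgHom_apply, map_neg] at h1
    rw [hD, ← h1]
  have hexp : NormedSpace.exp (P + -D) =
      ((NormedSpace.exp B)ᵀ ⊗ₖ (1 : Matrix (Fin m) (Fin m) ℂ)) *
        ((1 : Matrix (Fin n) (Fin n) ℂ) ⊗ₖ NormedSpace.exp (-Bhat)) := by
    rw [Matrix.exp_add_of_commute P (-D) hcomPD, hexpP, hexpD]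
  rw [hexp, hexpD] at hsemi
  set e := NormedSpace.exp (-Bhat) with he
  have hL : ((NormedSpace.exp B)ᵀ ⊗ₖ (1 : Matrix (Fin m) (Fin m) ℂ)) *
      ((1 : Matrix (Fin n) (Fin n) ℂ) ⊗ₖ e) * V
      = ∑ k, ∑ l, (NormedSpace.exp B) k l •
          (Matrix.single l c (1 : ℂ) ⊗ₖ (e * astar k)) := by
    rw [← Matrix.mul_kronecker_mul, mul_one, one_mul, hV, Finset.mul_sum]
    refine Finset.sum_congr rfl fun k _ => ?_
    rw [← Matrix.mul_kronecker_mul, mulE, kron_sum_smul_left]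
    refine Finset.sum_congr rfl fun l _ => ?_
    rw [Matrix.transpose_apply]
  have hR : V * ((1 : Matrix (Fin n) (Fin n) ℂ) ⊗ₖ e)
      = ∑ k, Matrix.single k c (1 : ℂ) ⊗ₖ (astar k * e) := by
    rw [hV, Finset.sum_mul]
    refine Finset.sum_congr rfl fun k _ => ?_
    rw [← Matrix.mul_kronecker_mul, mul_one]
  rw [hL, hR] at hsemi
  ext i i'
  have hent := congrFun (congrFun hsemi.symm (c, i)) (c, i')
  simp only [Matrix.sum_apply, Matrix.smul_apply, Matrix.kroneckerMap_apply, smul_eq_mul,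
    Matrix.single, Matrix.of_apply, and_true, ite_mul, one_mul, zero_mul, mul_ite,
    mul_zero, Finset.sum_ite_eq', Finset.mem_univ, if_true] at hent ⊢
  convert hent using 1

/-- Two-point function of a fermionic quasi-free state.  Let `a, a*` be fermionic
annihilation/creation operators (realized as matrices on a finite-dimensional Fock
space) satisfying the CAR, let `Â = ∑ A_{k,l} a*_k a_l` be the second quantization of
the matrix `A`, and assume `det(1 + e^{-A}) ≠ 0`.  Then the state
`⟨X⟩ = Tr(e^{-Â} X)/Tr(e^{-Â})` satisfies `⟨a*_m a_j⟩ = [(1 + e^{A})⁻¹]_{j,m}`. -/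
theorem quasifree_two_point_function {m n : ℕ}
    (a astar : Fin n → Matrix (Fin m) (Fin m) ℂ)
    (hCAR1 : ∀ i j, a i * a j + a j * a i = 0)
    (hCAR2 : ∀ i j, astar i * astar j + astar j * astar i = 0)
    (hCAR3 : ∀ i j, a i * astar j + astar j * a i = if i = j then 1 else 0)
    (A : Matrix (Fin n) (Fin n) ℂ)
    (Ahat : Matrix (Fin m) (Fin m) ℂ)
    (hAhat : Ahat = ∑ k : Fin n, ∑ l : Fin n, A k l • (astar k * a l))
    (hdetm : Matrix.det (1 + NormedSpace.exp (-A)) ≠ 0)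
    (hdet : Matrix.det (1 + NormedSpace.exp A) ≠ 0)
    (hZ : Matrix.trace (NormedSpace.exp (-Ahat)) ≠ 0) :
    ∀ M j : Fin n,
      Matrix.trace (NormedSpace.exp (-Ahat) * (astar M * a j)) /
          Matrix.trace (NormedSpace.exp (-Ahat))
        = (1 + NormedSpace.exp A)⁻¹ j M := by
  classical
  intro M j
  have hmove : ∀ k l cc : Fin n, astar k * a l * astar cc
      = (if l = cc then (1:ℂ) else 0) • astar k + astar cc * (astar k * a l) := by
    intro k l cc
    have hl : a l * astar cc = (if l = cc then (1 : Matrix (Fin m) (Fin m) ℂ) else 0)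
        - astar cc * a l := eq_sub_of_add_eq (hCAR3 l cc)
    have hs : astar k * astar cc = -(astar cc * astar k) :=
      eq_neg_of_add_eq_zero_left (hCAR2 k cc)
    rw [mul_assoc, hl, mul_sub, ← mul_assoc, hs]
    split_ifs with h
    · simp [mul_assoc]
    · simp [mul_assoc]
  have hcomm : ∀ c, Ahat * astar c = astar c * Ahat + ∑ k, A k c • astar k := by
    intro c
    rw [hAhat, Finset.sum_mul, Finset.mul_sum, ← Finset.sum_add_distrib]
    refine Finset.sum_congr rfl fun k _ => ?_
    rw [Finset.sum_mul, Finset.mul_sum]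
    have hstep : ∀ l, (A k l • (astar k * a l)) * astar c
        = (A k l * if l = c then 1 else 0) • astar k + astar c * (A k l • (astar k * a l)) := by
      intro l
      rw [smul_mul_assoc, hmove k l c, smul_add, smul_smul, mul_smul_comm]
    rw [Finset.sum_congr rfl fun l _ => hstep l, Finset.sum_add_distrib]
    simp [mul_ite, Finset.sum_ite_eq', add_comm]
  set e := NormedSpace.exp (-Ahat) with he
  set f := NormedSpace.exp Ahat with hf
  set EN := NormedSpace.exp (-A) with hEN
  have hcomm' : ∀ c, (-Ahat) * astar c = astar c * (-Ahat) + ∑ k, (-A) k c • astar k := by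
    intro c
    rw [neg_mul, hcomm c, neg_add, mul_neg]
    congr 1
    rw [← Finset.sum_neg_distrib]
    exact Finset.sum_congr rfl fun k _ => by simp
  have hII : ∀ c, astar c * f = ∑ k, EN k c • (f * astar k) := by
    intro c
    have h := key_creation astar (-A) (-Ahat) hcomm' c
    rwa [neg_neg] at h
  have hef : e * f = 1 := by
    rw [he, hf, ← Matrix.exp_add_of_commute (-Ahat) Ahat ((Commute.refl Ahat).neg_left),
      neg_add_cancel, NormedSpace.exp_zero]
  have hfe : f * e = 1 := by
    rw [he, hf, ← Matrix.exp_add_of_commute Ahat (-Ahat) ((Commute.refl Ahat).neg_right),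
      add_neg_cancel, NormedSpace.exp_zero]
  have hIII : ∀ c, e * astar c = ∑ k, EN k c • (astar k * e) := by
    intro c
    have h2 := congrArg (fun X => e * X * e) (hII c)
    beta_reduce at h2
    have hL2 : e * (astar c * f) * e = e * astar c := by
      rw [← mul_assoc, mul_assoc (e * astar c) f e, hfe, mul_one]
    have hR2 : e * (∑ k, EN k c • (f * astar k)) * e
        = ∑ k, EN k c • (astar k * e) := by
      rw [Finset.mul_sum, Finset.sum_mul]
      refine Finset.sum_congr rfl fun k _ => ?_
      rw [mul_smul_comm, smul_mul_assoc]
      congr 1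
      rw [← mul_assoc, hef, one_mul]
    rw [← hL2, h2, hR2]
  have hT : ∀ p q : Fin n,
      Matrix.trace (e * (astar q * a p)) + ∑ k, EN k q * Matrix.trace (e * (astar k * a p))
        = EN p q * Matrix.trace e := by
    intro p q
    have step : ∀ k, Matrix.trace (astar k * e * a p)
        = (if p = k then Matrix.trace e else 0) - Matrix.trace (e * (astar k * a p)) := by
      intro k
      have hpk : a p * astar k = (if p = k then (1 : Matrix (Fin m) (Fin m) ℂ) else 0)
          - astar k * a p := eq_sub_of_add_eq (hCAR3 p k)
      rw [Matrix.trace_mul_comm, ← mul_assoc, hpk, sub_mul, Matrix.trace_sub, ite_mul,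
        one_mul, zero_mul, apply_ite Matrix.trace, Matrix.trace_zero,
        Matrix.trace_mul_comm (astar k * a p) e]
    have hmain : Matrix.trace (e * (astar q * a p))
        = ∑ k, EN k q * Matrix.trace (astar k * e * a p) := by
      rw [← mul_assoc, hIII q, Finset.sum_mul, Matrix.trace_sum]
      exact Finset.sum_congr rfl fun k _ => by
        rw [smul_mul_assoc, Matrix.trace_smul, smul_eq_mul]
    rw [hmain]
    simp only [step]
    rw [← Finset.sum_add_distrib]
    simp [mul_sub, sub_add_cancel, mul_ite, Finset.sum_ite_eq]
  set G : Matrix (Fin n) (Fin n) ℂ :=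
    Matrix.of fun p q => Matrix.trace (e * (astar q * a p)) with hGdef
  have hG : G * (1 + EN) = Matrix.trace e • EN := by
    ext p q
    simp only [Matrix.mul_apply, Matrix.add_apply, Matrix.one_apply, Matrix.smul_apply,
      smul_eq_mul, hGdef, Matrix.of_apply, mul_add, Finset.sum_add_distrib, mul_ite, mul_one,
      mul_zero, Finset.sum_ite_eq']
    rw [show (∑ k, Matrix.trace (e * (astar k * a p)) * EN k q)
        = ∑ k, EN k q * Matrix.trace (e * (astar k * a p)) from
      Finset.sum_congr rfl fun k _ => mul_comm _ _]
    simp only [Finset.mem_univ, if_true]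
    rw [hT p q, mul_comm]
  have hdetm' : IsUnit (1 + EN).det := by rwa [isUnit_iff_ne_zero]
  have hAE : NormedSpace.exp A * EN = 1 := by
    rw [hEN, ← Matrix.exp_add_of_commute A (-A) ((Commute.refl A).neg_right), add_neg_cancel,
      NormedSpace.exp_zero]
  have hinv : (1 + NormedSpace.exp A)⁻¹ = EN * (1 + EN)⁻¹ := by
    refine Matrix.inv_eq_right_inv ?_
    rw [← mul_assoc, add_mul, one_mul, hAE, add_comm EN 1, Matrix.mul_nonsing_inv _ hdetm']
  have hGZ : G = Matrix.trace e • (1 + NormedSpace.exp A)⁻¹ := by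
    have h1 : G = G * ((1 + EN) * (1 + EN)⁻¹) := by
      rw [Matrix.mul_nonsing_inv _ hdetm', mul_one]
    rw [h1, ← mul_assoc, hG, Matrix.smul_mul, hinv]
  have hfin := congrFun (congrFun hGZ j) M
  simp only [hGdef, Matrix.of_apply, Matrix.smul_apply, smul_eq_mul] at hfin
  rw [hfin, mul_div_cancel_left₀ _ hZ]
end
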